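/- arXiv:2411.07857 — 3 statements merged into one kernel-verified Lean document; each statement's English description precedes it below -/
import Mathlib

section
/- Let k be a finite field and let G ≤ GL₂(k) be a subgroup. Then the following are equivalent: (1) G contains SL₂(k); (2) the image PG of G in PGL₂(k) contains PSL₂(k); (3) G = GL₂(k)_A where A = det(G) is the image of G under the determinant map. -/
open Matrix

set_option linter.unusedSectionVars false

variable (k : Type) [Field k] [Fintype k]

/-- The subgroup of scalar matrices in `GL₂(k)`. -/
def scalarSubgroup : Subgroup (GL (Fin 2) k) :=
  (Units.map ((Matrix.scalar (Fin 2) : k →+* Matrix (Fin 2) (Fin 2) k)).toMonoidHom).range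

instance scalarSubgroup_normal : (scalarSubgroup k).Normal := by
  constructor
  rintro x ⟨c, rfl⟩ g
  refine ⟨c, Units.ext ?_⟩
  have hc : Commute ((Matrix.scalar (Fin 2)) (c : k)) ((g : Matrix (Fin 2) (Fin 2) k)) :=
    Matrix.scalar_commute _ (fun r => Commute.all _ r) _
  push_cast
  calc ((Matrix.scalar (Fin 2)) (c : k) : Matrix (Fin 2) (Fin 2) k)
      = (Matrix.scalar (Fin 2)) (c : k) * ((g : Matrix (Fin 2) (Fin 2) k) * (↑g⁻¹)) := by
        rw [Units.mul_inv, mul_one]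
    _ = (g : Matrix (Fin 2) (Fin 2) k) * (Matrix.scalar (Fin 2)) (c : k) * (↑g⁻¹) := by
        rw [← mul_assoc, hc.eq]
  simp [Units.val_mul]

/-- `PGL₂(k)`: the quotient of `GL₂(k)` by its subgroup of scalar matrices. -/
abbrev PGL2 := GL (Fin 2) k ⧸ scalarSubgroup k

/-- The canonical projection `P : GL₂(k) → PGL₂(k)`. -/
def pglProj : GL (Fin 2) k →* PGL2 k := QuotientGroup.mk' (scalarSubgroup k)

/-- `SL₂(k)` as the subgroup of `GL₂(k)` of determinant-one matrices. -/
def SL2sub : Subgroup (GL (Fin 2) k) :=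
  MonoidHom.ker (Matrix.GeneralLinearGroup.det : GL (Fin 2) k →* kˣ)

namespace Stmt1Aux

open scoped commutatorElement

variable {k}

/-- upper transvection -/
def L (x : k) : GL (Fin 2) k :=
  ⟨!![1, x; 0, 1], !![1, -x; 0, 1],
    by ext i j; fin_cases i <;> fin_cases j <;> simp [Matrix.mul_apply, Fin.sum_univ_two],
    by ext i j; fin_cases i <;> fin_cases j <;> simp [Matrix.mul_apply, Fin.sum_univ_two]⟩

/-- lower transvection -/
def R (y : k) : GL (Fin 2) k :=
  ⟨!![1, 0; y, 1], !![1, 0; -y, 1],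
    by ext i j; fin_cases i <;> fin_cases j <;> simp [Matrix.mul_apply, Fin.sum_univ_two],
    by ext i j; fin_cases i <;> fin_cases j <;> simp [Matrix.mul_apply, Fin.sum_univ_two]⟩

/-- diagonal element diag(a, a⁻¹) -/
def D (a : kˣ) : GL (Fin 2) k :=
  ⟨!![(a:k), 0; 0, ((a⁻¹ : kˣ):k)], !![((a⁻¹ : kˣ):k), 0; 0, (a:k)],
    by ext i j; fin_cases i <;> fin_cases j <;>
      simp [Matrix.mul_apply, Fin.sum_univ_two, Units.mul_inv, Units.inv_mul],
    by ext i j; fin_cases i <;> fin_cases j <;>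
      simp [Matrix.mul_apply, Fin.sum_univ_two, Units.mul_inv, Units.inv_mul]⟩

lemma mem_SL2_iff (g : GL (Fin 2) k) :
    g ∈ SL2sub k ↔ Matrix.det (g : Matrix (Fin 2) (Fin 2) k) = 1 := by
  simp [SL2sub, MonoidHom.mem_ker, Units.ext_iff, Matrix.GeneralLinearGroup.val_det_apply]

lemma L_mem_SL (x : k) : L x ∈ SL2sub k := by
  rw [mem_SL2_iff]; show Matrix.det !![(1:k), x; 0, 1] = 1; simp [Matrix.det_fin_two_of]

lemma R_mem_SL (y : k) : R y ∈ SL2sub k := by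
  rw [mem_SL2_iff]; show Matrix.det !![(1:k), 0; y, 1] = 1; simp [Matrix.det_fin_two_of]

lemma D_mem_SL (a : kˣ) : D a ∈ SL2sub k := by
  rw [mem_SL2_iff]
  show Matrix.det !![(a:k), 0; 0, ((a⁻¹ : kˣ):k)] = 1
  simp [Matrix.det_fin_two_of, Units.mul_inv]

/-- the scalar unit `c • 1` in `GL₂`. -/
def scalU (c : kˣ) : GL (Fin 2) k :=
  Units.map ((Matrix.scalar (Fin 2) : k →+* Matrix (Fin 2) (Fin 2) k)).toMonoidHom c

lemma scalU_mem (c : kˣ) : scalU c ∈ scalarSubgroup k := ⟨c, rfl⟩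

lemma scalU_comm (c : kˣ) (g : GL (Fin 2) k) : scalU c * g = g * scalU c := by
  apply Units.ext
  show (Matrix.scalar (Fin 2)) (c : k) * _ = _ * (Matrix.scalar (Fin 2)) (c : k)
  exact (Matrix.scalar_commute _ (fun r => Commute.all _ r) _).eq

lemma scalU_mul (c e : kˣ) : scalU (c * e) = (scalU c * scalU e : GL (Fin 2) k) :=
  map_mul (Units.map ((Matrix.scalar (Fin 2) : k →+* Matrix (Fin 2) (Fin 2) k)).toMonoidHom) c e

lemma scalU_one : (scalU 1 : GL (Fin 2) k) = 1 :=
  map_one (Units.map ((Matrix.scalar (Fin 2) : k →+* Matrix (Fin 2) (Fin 2) k)).toMonoidHom)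

lemma comm_eq {M : Type*} [Group M] {u v w : M} (h : u * v = w * (v * u)) : ⁅u, v⁆ = w := by
  rw [commutatorElement_def, show u * v * u⁻¹ * v⁻¹ = (u * v) * (v * u)⁻¹ by group, h]
  group

lemma comm_center {M : Type*} [Group M] (z w u v : M)
    (hz : ∀ g, z * g = g * z) (hw : ∀ g, w * g = g * w) :
    ⁅z * u, w * v⁆ = ⁅u, v⁆ := by
  have hz' : ∀ g : M, z⁻¹ * g = g * z⁻¹ := fun g => (Commute.inv_left (hz g) : Commute z⁻¹ g)
  rw [commutatorElement_def, commutatorElement_def]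
  calc (z*u)*(w*v)*(z*u)⁻¹*(w*v)⁻¹
      = z * ((u*w*v*u⁻¹) * (z⁻¹ * (v⁻¹*w⁻¹))) := by group
    _ = z * ((u*w*v*u⁻¹) * ((v⁻¹*w⁻¹) * z⁻¹)) := by rw [hz']
    _ = z * ((u*w*v*u⁻¹*v⁻¹*w⁻¹) * z⁻¹) := by group
    _ = z * (z⁻¹ * (u*w*v*u⁻¹*v⁻¹*w⁻¹)) := by rw [← hz']
    _ = u * (w * (v*u⁻¹*v⁻¹) * w⁻¹) := by group
    _ = u * ((v*u⁻¹*v⁻¹) * w * w⁻¹) := by rw [hw]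
    _ = u*v*u⁻¹*v⁻¹ := by group

section Main

variable {G : Subgroup (GL (Fin 2) k)}
variable (hkey : ∀ s : GL (Fin 2) k, s ∈ SL2sub k → ∃ c : kˣ, scalU c * s ∈ G)

include hkey

/-- commutators of SL₂ elements belong to G. -/
lemma comm_mem {u v : GL (Fin 2) k} (hu : u ∈ SL2sub k) (hv : v ∈ SL2sub k) :
    ⁅u, v⁆ ∈ G := by
  obtain ⟨c, hc⟩ := hkey u hu
  obtain ⟨e, he⟩ := hkey v hv
  have : ⁅scalU c * u, scalU e * v⁆ = ⁅u, v⁆ :=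
    comm_center _ _ _ _ (fun g => scalU_comm c g) (fun g => scalU_comm e g)
  rw [← this, commutatorElement_def]
  exact mul_mem (mul_mem (mul_mem hc he) (inv_mem hc)) (inv_mem he)

omit hkey

/-- the key decomposition for elements with nonzero lower-left entry. -/
lemma mem_of_lowleft_ne (hL : ∀ x : k, L x ∈ G) (hR : ∀ y : k, R y ∈ G)
    {s : GL (Fin 2) k} (hs : s ∈ SL2sub k)
    (hc : (s : Matrix (Fin 2) (Fin 2) k) 1 0 ≠ 0) : s ∈ G := by
  obtain ⟨a, b, c, d, hmat⟩ : ∃ a b c d : k, (s : Matrix (Fin 2) (Fin 2) k) = !![a,b;c,d] :=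
    ⟨_, _, _, _, Matrix.eta_fin_two _⟩
  rw [hmat] at hc
  have hc' : c ≠ 0 := by simpa using hc
  have hdet : a * d - b * c = 1 := by
    rw [mem_SL2_iff, hmat] at hs
    simpa [Matrix.det_fin_two_of] using hs
  have hdecomp : s = L ((a - 1) / c) * R c * L ((d - 1) / c) := by
    apply Units.ext
    show (s : Matrix (Fin 2) (Fin 2) k)
        = !![1, (a-1)/c; 0, 1] * !![1, 0; c, 1] * !![1, (d-1)/c; 0, 1]
    rw [hmat]
    ext i j
    fin_cases i <;> fin_cases j <;>
      simp [Matrix.mul_apply, Fin.sum_univ_two] <;>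
      field_simp <;>
      first | ring1 | linear_combination -hdet
  rw [hdecomp]
  exact mul_mem (mul_mem (hL _) (hR _)) (hL _)

lemma SL_le_of_transvections (hL : ∀ x : k, L x ∈ G) (hR : ∀ y : k, R y ∈ G) :
    SL2sub k ≤ G := by
  intro s hs
  by_cases hc : (s : Matrix (Fin 2) (Fin 2) k) 1 0 ≠ 0
  · exact mem_of_lowleft_ne hL hR hs hc
  · push_neg at hc
    rw [← mul_mem_cancel_right (hR 1)]
    have hsR : s * R 1 ∈ SL2sub k := mul_mem hs (R_mem_SL 1)
    apply mem_of_lowleft_ne hL hR hsR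
    have hval : ((s * R 1 : GL (Fin 2) k) : Matrix (Fin 2) (Fin 2) k) 1 0
        = (s : Matrix (Fin 2) (Fin 2) k) 1 1 := by
      have hmul : ((s * R 1 : GL (Fin 2) k) : Matrix (Fin 2) (Fin 2) k)
          = (s : Matrix (Fin 2) (Fin 2) k) * !![1, 0; 1, 1] := rfl
      rw [hmul]
      simp [Matrix.mul_apply, Fin.sum_univ_two, hc]
    rw [hval]
    -- d ≠ 0 because a * d = 1
    intro hd0
    have hdet : (s : Matrix (Fin 2) (Fin 2) k) 0 0 * (s : Matrix (Fin 2) (Fin 2) k) 1 1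
        - (s : Matrix (Fin 2) (Fin 2) k) 0 1 * (s : Matrix (Fin 2) (Fin 2) k) 1 0 = 1 := by
      rw [mem_SL2_iff] at hs
      rw [← hs, Matrix.det_fin_two]
    rw [hd0, hc] at hdet
    simp at hdet

include hkey

/-- Generic case: there is a unit whose square isn't 1. -/
lemma SL_le_generic (a : kˣ) (ha : (a : k)^2 ≠ 1) : SL2sub k ≤ G := by
  have hne : (a : k)^2 - 1 ≠ 0 := sub_ne_zero.mpr ha
  have hL : ∀ x : k, L x ∈ G := by
    intro x
    have hcomm : ⁅D a, L (x / ((a:k)^2 - 1))⁆ = L x := by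
      apply comm_eq
      apply Units.ext
      show (!![(a:k), 0; 0, ((a⁻¹:kˣ):k)] * !![1, x / ((a:k)^2-1); 0, 1]
          : Matrix (Fin 2) (Fin 2) k)
          = !![1, x; 0, 1] * (!![1, x / ((a:k)^2-1); 0, 1] * !![(a:k), 0; 0, ((a⁻¹:kˣ):k)])
      have hinv : ((a⁻¹:kˣ):k) = (a:k)⁻¹ := Units.val_inv_eq_inv_val a
      have ha0 : (a:k) ≠ 0 := a.ne_zero
      ext i j
      fin_cases i <;> fin_cases j <;>
        simp [Matrix.mul_apply, Fin.sum_univ_two, hinv] <;>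
        field_simp <;> ring
    rw [← hcomm]
    exact comm_mem hkey (D_mem_SL a) (L_mem_SL _)
  have hR : ∀ y : k, R y ∈ G := by
    intro y
    have hcomm : ⁅D a⁻¹, R (y / ((a:k)^2 - 1))⁆ = R y := by
      apply comm_eq
      apply Units.ext
      show (!![((a⁻¹:kˣ):k), 0; 0, ((a⁻¹⁻¹:kˣ):k)] * !![1, 0; y / ((a:k)^2-1), 1]
          : Matrix (Fin 2) (Fin 2) k)
          = !![1, 0; y, 1] * (!![1, 0; y / ((a:k)^2-1), 1] * !![((a⁻¹:kˣ):k), 0; 0, ((a⁻¹⁻¹:kˣ):k)])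
      have hinv : ((a⁻¹:kˣ):k) = (a:k)⁻¹ := Units.val_inv_eq_inv_val a
      have hinv2 : ((a⁻¹⁻¹:kˣ):k) = (a:k) := by rw [inv_inv]
      have ha0 : (a:k) ≠ 0 := a.ne_zero
      ext i j
      fin_cases i <;> fin_cases j <;>
        simp [Matrix.mul_apply, Fin.sum_univ_two, hinv, hinv2] <;>
        field_simp <;> ring
    rw [← hcomm]
    exact comm_mem hkey (D_mem_SL a⁻¹) (R_mem_SL _)
  exact SL_le_of_transvections hL hR

/-- char 2, all squares one: trivial scalars. -/
lemma SL_le_char2 (hsq : ∀ a : kˣ, (a:k)^2 = 1) (h2 : (1 + 1 : k) = 0) : SL2sub k ≤ G := by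
  intro s hs
  obtain ⟨c, hc⟩ := hkey s hs
  have hc1 : (c : k) = 1 := by
    have h := hsq c
    have hz : ((c:k) - 1)^2 = 0 := by linear_combination h - ((c:k)) * h2 + h2
    have := pow_eq_zero_iff (n := 2) (by norm_num) |>.mp hz
    linear_combination this
  have hscal : scalU c = 1 := by
    apply Units.ext
    show (Matrix.scalar (Fin 2)) (c : k) = 1
    rw [hc1]
    exact _root_.map_one (Matrix.scalar (Fin 2) : k →+* Matrix (Fin 2) (Fin 2) k)
  rwa [hscal, one_mul] at hc

/-- q = 3 case: -1 ∈ G via an explicit commutator. -/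
lemma SL_le_q3 (hsq : ∀ a : kˣ, (a:k)^2 = 1) (h2 : (1 + 1 : k) ≠ 0) : SL2sub k ≤ G := by
  -- first, 1 + 1 = -1
  have h3 : (1 + 1 : k) = -1 := by
    have hu : ∀ a : kˣ, (a : k) = 1 ∨ (a : k) = -1 := by
      intro a
      have h := hsq a
      have h' : ((a:k) - 1) * ((a:k) + 1) = 0 := by linear_combination h
      rcases mul_eq_zero.mp h' with h | h
      · exact Or.inl (by linear_combination h)
      · exact Or.inr (by linear_combination h)
    have hunit : IsUnit (1 + 1 : k) := isUnit_iff_ne_zero.mpr h2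
    obtain ⟨u, hu'⟩ := hunit
    rcases hu u with h | h <;> rw [hu'] at h
    · exact absurd (by linear_combination h : (1:k) = 0) one_ne_zero
    · exact h
  -- the elements i and j
  set i : GL (Fin 2) k :=
    ⟨!![0, -1; 1, 0], !![0, 1; -1, 0],
      by ext i j; fin_cases i <;> fin_cases j <;> simp [Matrix.mul_apply, Fin.sum_univ_two],
      by ext i j; fin_cases i <;> fin_cases j <;> simp [Matrix.mul_apply, Fin.sum_univ_two]⟩
    with hi
  have h3' : (3 : k) = 0 := by linear_combination h3
  set j : GL (Fin 2) k :=
    ⟨!![1, 1; 1, -1], !![-1, -1; -1, 1],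
      by ext a b; fin_cases a <;> fin_cases b <;>
        simp [Matrix.mul_apply, Fin.sum_univ_two] <;>
        first | linear_combination h3' | linear_combination -h3' | linear_combination (2:k)*h3' | linear_combination (-2:k)*h3',
      by ext a b; fin_cases a <;> fin_cases b <;>
        simp [Matrix.mul_apply, Fin.sum_univ_two] <;>
        first | linear_combination h3' | linear_combination -h3' | linear_combination (2:k)*h3' | linear_combination (-2:k)*h3'⟩
    with hj
  have hiSL : i ∈ SL2sub k := by
    rw [mem_SL2_iff]; show Matrix.det !![(0:k), -1; 1, 0] = 1; simp [Matrix.det_fin_two_of]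
  have hjSL : j ∈ SL2sub k := by
    rw [mem_SL2_iff]; show Matrix.det !![(1:k), 1; 1, -1] = 1
    simp [Matrix.det_fin_two_of]
    first | linear_combination h3 | linear_combination -h3 | linear_combination (2:k)*h3 | linear_combination (-2:k)*h3
  have hneg : ⁅i, j⁆ = (-1 : GL (Fin 2) k) := by
    apply comm_eq
    apply Units.ext
    show (!![(0:k), -1; 1, 0] * !![1, 1; 1, -1] : Matrix (Fin 2) (Fin 2) k)
        = (-1 : GL (Fin 2) k).val * (!![1, 1; 1, -1] * !![(0:k), -1; 1, 0])
    have : ((-1 : GL (Fin 2) k) : Matrix (Fin 2) (Fin 2) k) = -1 := rfl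
    rw [this]
    ext a b
    fin_cases a <;> fin_cases b <;>
      simp [Matrix.mul_apply, Fin.sum_univ_two]
  have hnegG : (-1 : GL (Fin 2) k) ∈ G := by
    rw [← hneg]; exact comm_mem hkey hiSL hjSL
  intro s hs
  obtain ⟨c, hc⟩ := hkey s hs
  have hcases : (c : k) = 1 ∨ (c : k) = -1 := by
    have h := hsq c
    have h' : ((c:k) - 1) * ((c:k) + 1) = 0 := by linear_combination h
    rcases mul_eq_zero.mp h' with h | h
    · exact Or.inl (by linear_combination h)
    · exact Or.inr (by linear_combination h)
  rcases hcases with h1 | h1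
  · have hscal : scalU c = 1 := by
      apply Units.ext
      show (Matrix.scalar (Fin 2)) (c : k) = 1
      rw [h1]
      exact _root_.map_one (Matrix.scalar (Fin 2) : k →+* Matrix (Fin 2) (Fin 2) k)
    rwa [hscal, one_mul] at hc
  · have hscal : scalU c = (-1 : GL (Fin 2) k) := by
      apply Units.ext
      show (Matrix.scalar (Fin 2)) (c : k) = ((-1 : GL (Fin 2) k) : Matrix (Fin 2) (Fin 2) k)
      rw [h1]
      show (Matrix.scalar (Fin 2)) (-1 : k) = -1
      ext a b
      by_cases hab : a = b <;>
        simp [Matrix.diagonal_apply, Matrix.one_apply, Matrix.scalar_apply, hab]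
    rw [hscal] at hc
    have := mul_mem hnegG hc
    rwa [show (-1 : GL (Fin 2) k) * ((-1 : GL (Fin 2) k) * s) = s by rw [← mul_assoc]; simp] at this
    
lemma SL_le_of_key : SL2sub k ≤ G := by
  by_cases hgen : ∃ a : kˣ, (a : k)^2 ≠ 1
  · obtain ⟨a, ha⟩ := hgen
    exact SL_le_generic hkey a ha
  · push_neg at hgen
    by_cases h2 : (1 + 1 : k) = 0
    · exact SL_le_char2 hkey hgen h2
    · exact SL_le_q3 hkey hgen h2

end Main

end Stmt1Aux

/-- For a subgroup `G ≤ GL₂(k)` over a finite field `k`, the following are equivalent: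
(1) `G` contains `SL₂(k)`; (2) the image of `G` in `PGL₂(k)` contains `PSL₂(k)`;
(3) `G = GL₂(k)_A` where `A = det(G)`. -/
theorem stmt_1 (G : Subgroup (GL (Fin 2) k)) :
    List.TFAE [SL2sub k ≤ G,
      Subgroup.map (pglProj k) (SL2sub k) ≤ Subgroup.map (pglProj k) G,
      G = Subgroup.comap (Matrix.GeneralLinearGroup.det : GL (Fin 2) k →* kˣ)
            (Subgroup.map (Matrix.GeneralLinearGroup.det : GL (Fin 2) k →* kˣ) G)] := by
  tfae_have 1 → 2 := fun h => Subgroup.map_mono h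
  tfae_have 1 → 3 := by
    intro h
    rw [Subgroup.comap_map_eq]
    exact (sup_eq_left.mpr h).symm
  tfae_have 3 → 1 := by
    intro h s hs
    rw [h, Subgroup.mem_comap]
    rw [show Matrix.GeneralLinearGroup.det s = 1 from hs]
    exact one_mem _
  tfae_have 2 → 1 := by
    intro h
    apply Stmt1Aux.SL_le_of_key
    intro s hs
    obtain ⟨g, hg, hgs⟩ := h (Subgroup.mem_map_of_mem _ hs)
    have hgs' : QuotientGroup.mk' (scalarSubgroup k) g = QuotientGroup.mk' (scalarSubgroup k) s :=
      hgs
    obtain ⟨z, hz, hzg⟩ := (QuotientGroup.mk'_eq_mk' (N := scalarSubgroup k)).mp hgs' 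
    obtain ⟨c, rfl⟩ := hz
    refine ⟨c⁻¹, ?_⟩
    have hzg' : g * Stmt1Aux.scalU c = s := hzg
    have hrw : Stmt1Aux.scalU (c⁻¹) * s = g := by
      rw [← hzg', ← mul_assoc, Stmt1Aux.scalU_comm, mul_assoc, ← Stmt1Aux.scalU_mul,
        inv_mul_cancel, Stmt1Aux.scalU_one, mul_one]
    rw [hrw]
    exact hg
  tfae_finish
end

section
/- The trace lemma fails for the fields with 2, 3, and 5 elements: for each q ∈ {2, 3, 5} there exists a proper subgroup G ⊊ SL₂(𝔽_q) whose set of traces {tr g : g ∈ G} equals all of 𝔽_q. (Witnesses: a cyclic subgroup of order 3 in SL₂(𝔽₂), the quaternion subgroup Q₈ ≤ SL₂(𝔽₃), and a subgroup of SL₂(𝔽₅) isomorphic to SL₂(𝔽₃).) -/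
open Matrix

/-- The four entries of a 2×2 matrix as a tuple. -/
private def tup {n : ℕ} (A : Matrix (Fin 2) (Fin 2) (ZMod n)) :
    ZMod n × ZMod n × ZMod n × ZMod n :=
  (A 0 0, A 0 1, A 1 0, A 1 1)

/-- Tuple-level product of 2×2 matrices. -/
private def mulT {n : ℕ} (x y : ZMod n × ZMod n × ZMod n × ZMod n) :
    ZMod n × ZMod n × ZMod n × ZMod n :=
  (x.1 * y.1 + x.2.1 * y.2.2.1, x.1 * y.2.1 + x.2.1 * y.2.2.2,
   x.2.2.1 * y.1 + x.2.2.2 * y.2.2.1, x.2.2.1 * y.2.1 + x.2.2.2 * y.2.2.2)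

/-- Tuple-level adjugate of a 2×2 matrix. -/
private def adjT {n : ℕ} (x : ZMod n × ZMod n × ZMod n × ZMod n) :
    ZMod n × ZMod n × ZMod n × ZMod n :=
  (x.2.2.2, -x.2.1, -x.2.2.1, x.1)

private lemma tup_mul {n : ℕ} (A B : Matrix (Fin 2) (Fin 2) (ZMod n)) :
    tup (A * B) = mulT (tup A) (tup B) := by
  simp [tup, mulT, Matrix.mul_apply, Fin.sum_univ_two]

private lemma tup_adjugate {n : ℕ} (A : Matrix (Fin 2) (Fin 2) (ZMod n)) :
    tup (adjugate A) = adjT (tup A) := by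
  simp [tup, adjT, Matrix.adjugate_fin_two]

private lemma tup_one {n : ℕ} :
    tup (1 : Matrix (Fin 2) (Fin 2) (ZMod n)) = (1, 0, 0, 1) := by
  simp [tup]

private def L2 : List (ZMod 2 × ZMod 2 × ZMod 2 × ZMod 2) :=
  [(1,0,0,1), (0,1,1,1), (1,1,1,0)]

private def L3 : List (ZMod 3 × ZMod 3 × ZMod 3 × ZMod 3) :=
  [(1,0,0,1), (0,2,1,0), (2,0,0,2), (0,1,2,0)]

private def L5 : List (ZMod 5 × ZMod 5 × ZMod 5 × ZMod 5) :=
  [(0,1,4,0), (0,2,2,0), (0,3,3,0), (0,4,1,0), (1,0,0,1), (1,1,2,3),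
   (1,2,1,3), (1,3,4,3), (1,4,3,3), (2,0,0,3), (2,1,2,4), (2,2,1,4),
   (2,3,4,4), (2,4,3,4), (3,0,0,2), (3,1,2,1), (3,2,1,1), (3,3,4,1),
   (3,4,3,1), (4,0,0,4), (4,1,2,2), (4,2,1,2), (4,3,4,2), (4,4,3,2)]

private def mkG {n : ℕ} (L : List (ZMod n × ZMod n × ZMod n × ZMod n))
    (h1 : ((1,0,0,1) : ZMod n × ZMod n × ZMod n × ZMod n) ∈ L)
    (hm : ∀ x ∈ L, ∀ y ∈ L, mulT x y ∈ L)
    (hi : ∀ x ∈ L, adjT x ∈ L) :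
    Subgroup (Matrix.SpecialLinearGroup (Fin 2) (ZMod n)) where
  carrier := {g | tup (g : Matrix (Fin 2) (Fin 2) (ZMod n)) ∈ L}
  one_mem' := by
    show tup ((1 : Matrix.SpecialLinearGroup (Fin 2) (ZMod n)) :
      Matrix (Fin 2) (Fin 2) (ZMod n)) ∈ L
    rw [Matrix.SpecialLinearGroup.coe_one, tup_one]; exact h1
  mul_mem' := fun {a b} ha hb => by
    show tup ((a * b : Matrix.SpecialLinearGroup (Fin 2) (ZMod n)) :
      Matrix (Fin 2) (Fin 2) (ZMod n)) ∈ L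
    rw [Matrix.SpecialLinearGroup.coe_mul, tup_mul]
    exact hm _ ha _ hb
  inv_mem' := fun {a} ha => by
    show tup ((a⁻¹ : Matrix.SpecialLinearGroup (Fin 2) (ZMod n)) :
      Matrix (Fin 2) (Fin 2) (ZMod n)) ∈ L
    rw [Matrix.SpecialLinearGroup.coe_inv, tup_adjugate]
    exact hi _ ha

private lemma mem_mkG {n : ℕ} {L : List (ZMod n × ZMod n × ZMod n × ZMod n)}
    {h1 hm hi} {g : Matrix.SpecialLinearGroup (Fin 2) (ZMod n)} :
    g ∈ mkG L h1 hm hi ↔ tup (g : Matrix (Fin 2) (Fin 2) (ZMod n)) ∈ L := Iff.rfl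

set_option maxRecDepth 4000 in
/-- The trace lemma fails for the fields with 2, 3 and 5 elements: for each
`q ∈ {2, 3, 5}` there is a proper subgroup of `SL₂(𝔽_q)` whose set of traces is all
of `𝔽_q`. -/
theorem stmt_5 :
    (∃ G : Subgroup (Matrix.SpecialLinearGroup (Fin 2) (ZMod 2)), G ≠ ⊤ ∧
      {t : ZMod 2 | ∃ s ∈ G, Matrix.trace (s : Matrix (Fin 2) (Fin 2) (ZMod 2)) = t} =
        Set.univ) ∧
    (∃ G : Subgroup (Matrix.SpecialLinearGroup (Fin 2) (ZMod 3)), G ≠ ⊤ ∧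
      {t : ZMod 3 | ∃ s ∈ G, Matrix.trace (s : Matrix (Fin 2) (Fin 2) (ZMod 3)) = t} =
        Set.univ) ∧
    (∃ G : Subgroup (Matrix.SpecialLinearGroup (Fin 2) (ZMod 5)), G ≠ ⊤ ∧
      {t : ZMod 5 | ∃ s ∈ G, Matrix.trace (s : Matrix (Fin 2) (Fin 2) (ZMod 5)) = t} =
        Set.univ) := by
  refine ⟨⟨mkG L2 (by decide) (by decide) (by decide), ?_, ?_⟩,
          ⟨mkG L3 (by decide) (by decide) (by decide), ?_, ?_⟩,
          ⟨mkG L5 (by decide) (by decide) (by decide), ?_, ?_⟩⟩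
  · intro h
    rw [Subgroup.eq_top_iff'] at h
    have := mem_mkG.mp (h ⟨!![0,1;1,0], by decide⟩)
    rw [show tup ((⟨!![0,1;1,0], by decide⟩ : Matrix.SpecialLinearGroup (Fin 2) (ZMod 2)) :
      Matrix (Fin 2) (Fin 2) (ZMod 2)) = (0,1,1,0) from rfl] at this
    revert this; decide
  · refine Set.eq_univ_iff_forall.2 fun t => ?_
    fin_cases t
    · exact ⟨1, mem_mkG.mpr (by rw [Matrix.SpecialLinearGroup.coe_one, tup_one]; decide),
        by rfl⟩
    · exact ⟨⟨!![0,1;1,1], by decide⟩, mem_mkG.mpr (by decide), by rfl⟩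
  · intro h
    rw [Subgroup.eq_top_iff'] at h
    have := mem_mkG.mp (h ⟨!![1,1;0,1], by decide⟩)
    rw [show tup ((⟨!![1,1;0,1], by decide⟩ : Matrix.SpecialLinearGroup (Fin 2) (ZMod 3)) :
      Matrix (Fin 2) (Fin 2) (ZMod 3)) = (1,1,0,1) from rfl] at this
    revert this; decide
  · refine Set.eq_univ_iff_forall.2 fun t => ?_
    fin_cases t
    · exact ⟨⟨!![0,2;1,0], by decide⟩, mem_mkG.mpr (by decide), by rfl⟩
    · exact ⟨⟨!![2,0;0,2], by decide⟩, mem_mkG.mpr (by decide), by rfl⟩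
    · exact ⟨1, mem_mkG.mpr (by rw [Matrix.SpecialLinearGroup.coe_one, tup_one]; decide),
        by rfl⟩
  · intro h
    rw [Subgroup.eq_top_iff'] at h
    have := mem_mkG.mp (h ⟨!![1,1;0,1], by decide⟩)
    rw [show tup ((⟨!![1,1;0,1], by decide⟩ : Matrix.SpecialLinearGroup (Fin 2) (ZMod 5)) :
      Matrix (Fin 2) (Fin 2) (ZMod 5)) = (1,1,0,1) from rfl] at this
    revert this; decide
  · refine Set.eq_univ_iff_forall.2 fun t => ?_
    fin_cases t
    · exact ⟨⟨!![0,4;1,0], by decide⟩, mem_mkG.mpr (by decide), by rfl⟩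
    · exact ⟨⟨!![2,1;2,4], by decide⟩, mem_mkG.mpr (by decide), by rfl⟩
    · exact ⟨1, mem_mkG.mpr (by rw [Matrix.SpecialLinearGroup.coe_one, tup_one]; decide),
        by rfl⟩
    · exact ⟨⟨!![4,0;0,4], by decide⟩, mem_mkG.mpr (by decide), by rfl⟩
    · exact ⟨⟨!![1,1;2,3], by decide⟩, mem_mkG.mpr (by decide), by rfl⟩
end

section
/- If G ≤ GL₂(𝔽₅) is a subgroup such that the set of characteristic polynomials {charpoly(g) : g ∈ G} equals the set of characteristic polynomials of all elements of GL₂(𝔽₅), then G = GL₂(𝔽₅). -/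
open Matrix Polynomial

set_option maxRecDepth 400000
set_option maxHeartbeats 4000000

abbrev Mt := Matrix (Fin 2) (Fin 2) (ZMod 5)

def a0 : Mt := !![0,2;1,1]
def b1 : Mt := !![0,2;1,2]

def CERT : List (Nat × Nat) := [(1,1), (1,2), (2,1), (2,2), (3,1), (3,2), (4,1), (4,2), (5,1), (5,2), (6,1), (6,2), (7,2), (8,1), (8,2), (9,1), (9,2), (10,1), (10,2), (11,1), (11,2), (12,1), (12,2), (13,1), (13,2), (14,1), (14,2), (15,1), (15,2), (16,1), (16,2), (17,1), (17,2), (18,1), (18,2), (19,1), (19,2), (20,1), (20,2), (21,1), (21,2), (22,2), (23,2), (24,1), (24,2), (25,1), (26,1), (26,2), (27,1), (27,2), (28,1), (29,1), (30,1), (30,2), (31,1), (31,2), (32,1), (32,2), (33,1), (33,2), (34,1), (34,2), (35,1), (35,2), (36,2), (37,2), (38,1), (38,2), (39,1), (40,1), (40,2), (41,1), (41,2), (42,1), (43,1), (44,1), (44,2), (45,1), (45,2), (46,1), (46,2), (47,1), (47,2), (48,1), (48,2), (49,2), (50,2), (51,1), (51,2), (52,1), (53,1), (53,2), (54,1), (55,1),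 (55,2), (56,1), (56,2), (57,1), (57,2), (58,1), (58,2), (59,2), (60,2), (61,1), (61,2), (62,1), (63,1), (63,2), (64,1), (64,2), (65,1), (66,1), (67,1), (67,2), (68,1), (68,2), (69,1), (69,2), (70,1), (70,2), (71,1), (71,2), (72,2), (73,2), (74,1), (74,2), (75,1), (76,1), (76,2), (77,1), (78,2), (79,1), (79,2), (80,2), (81,1), (82,2), (83,2), (84,1), (85,1), (86,1), (86,2), (87,1), (87,2), (88,1), (88,2), (89,2), (90,1), (90,2), (91,1), (92,2), (93,2), (94,2), (95,1), (96,2), (97,2), (98,1), (98,2), (99,1), (100,1), (100,2), (101,1), (101,2), (102,1), (103,1), (104,1), (104,2), (105,1), (105,2), (106,1), (106,2), (107,1), (107,2), (108,1), (108,2), (109,2), (110,2), (111,1), (111,2), (112,1), (113,1), (113,2), (114,1), (115,2), (116,1), (116,2), (117,2), (118,1), (119,2), (120,2), (121,1), (122,1), (123,1), (123,2), (124,1), (124,2), (125,1), (125,2), (126,2), (127,1), (127,2), (128,1), (129,2), (130,2), (131,2), (132,1), (133,2), (134,1), (134,2), (135,1), (135,2), (136,1), (136,2), (138,1), (139,1),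 (139,2), (140,1), (140,2), (141,2), (142,2), (143,2), (144,1), (144,2), (147,2), (148,1), (149,2), (150,2), (152,1), (152,2), (153,2), (154,2), (155,2), (156,1), (156,2), (157,1), (157,2), (158,1), (158,2), (159,1), (159,2), (160,1), (160,2), (161,2), (162,2), (163,1), (163,2), (164,1), (165,1), (165,2), (166,1), (167,2), (168,1), (168,2), (169,2), (170,1), (171,2), (172,2), (173,1), (174,1), (175,1), (175,2), (176,1), (176,2), (177,1), (177,2), (178,2), (179,1), (179,2), (180,1), (181,2), (182,2), (183,2), (184,1), (185,2), (186,1), (186,2), (187,1), (187,2), (188,1), (188,2), (190,1), (191,1), (191,2), (192,1), (192,2), (193,2), (194,2), (195,2), (196,1), (196,2), (199,2), (200,1), (201,2), (202,2), (204,1), (204,2), (205,2), (206,2), (207,2), (208,1), (209,1), (209,2), (210,2), (211,1), (214,1), (215,2), (220,1), (220,2), (221,1), (221,2), (222,2), (223,1), (225,1), (228,1), (228,2), (229,2), (234,2), (235,1), (235,2), (236,2), (237,1), (238,2), (239,2), (240,1), (241,1), (242,1), (242,2), (243,1), (243,2), (244,1), (244,2), (245,2), (246,1), (246,2), (247,1),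 (248,2), (249,2), (250,2), (251,1), (252,2), (253,1), (253,2), (254,1), (254,2), (255,1), (255,2), (257,1), (258,1), (258,2), (259,1), (259,2), (260,2), (261,2), (262,2), (263,1), (263,2), (266,2), (267,1), (268,2), (269,2), (271,1), (271,2), (272,2), (273,2), (274,2), (275,1), (276,1), (276,2), (277,2), (278,1), (281,1), (282,2), (287,1), (287,2), (288,1), (288,2), (289,2), (290,1), (292,1), (295,1), (295,2), (296,2), (301,2), (306,2), (307,2), (312,1), (313,2), (314,1), (318,2), (319,1), (319,2), (320,1), (320,2), (321,1), (321,2), (323,1), (324,1), (324,2), (325,1), (325,2), (326,2), (327,2), (328,2), (329,1), (329,2), (332,2), (333,1), (334,2), (335,2), (337,1), (337,2), (338,2), (339,2), (340,2), (341,1), (342,1), (342,2), (343,2), (344,1), (347,1), (348,2), (353,1), (353,2), (354,1), (354,2), (355,2), (356,1), (358,1), (361,1), (361,2), (362,2), (367,2), (372,2), (373,2), (378,1), (379,2), (380,1), (385,1), (385,2), (386,1), (390,1), (391,1), (391,2), (392,2), (393,1), (396,1), (397,2), (402,1), (402,2), (403,1), (403,2), (404,2), (405,1), (407,1), (410,1),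 (410,2), (411,2), (416,2), (421,2), (422,2), (427,1), (428,2), (429,1), (434,1), (434,2), (435,1), (442,2), (447,2), (448,2), (453,1), (454,2), (455,1), (460,1), (460,2), (461,1), (469,1), (469,2), (470,1)]

def L480 : List Mt := [!![1,0;0,1], !![0,2;1,1], !![0,2;1,2], !![2,2;1,3], !![2,4;1,4], !![2,2;2,4], !![2,4;2,1], !![2,1;3,0], !![2,3;3,3], !![4,3;4,1], !![4,2;4,0], !![2,1;4,3], !![2,3;4,2], !![4,3;1,0], !![4,2;1,1], !![1,1;0,1], !![3,2;3,4], !![3,0;3,2], !![3,1;1,4], !![3,4;1,0], !![2,0;0,3], !![2,2;0,3], !![1,0;3,1], !![1,1;3,4], !![3,2;2,0], !![3,0;2,2], !![3,1;0,2], !![3,4;0,2], !![2,0;1,3], !![2,2;1,4], !![1,3;1,1], !![1,4;1,2], !![2,3;4,0], !![2,0;4,4], !![0,1;2,3], !![0,1;2,0], !![1,2;4,1], !![1,3;4,0], !![4,0;0,2], !![4,4;0,2], !![0,4;3,3], !![0,4;3,1], !![2,1;3,3], !![2,3;3,1], !![0,2;1,3], !![1,4;4,4], !![2,3;0,4], !![2,0;0,4],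 !![0,1;2,1], !![1,2;2,2], !![1,3;2,4], !![4,0;2,2], !![4,4;2,4], !![0,4;3,0], !![2,1;4,1], !![3,0;1,3], !![3,3;1,4], !![4,1;2,4], !![4,0;2,1], !![3,2;0,3], !![3,0;0,3], !![0,4;4,2], !![0,4;4,1], !![1,1;3,2], !![1,2;3,0], !![1,1;0,4], !![1,2;0,4], !![2,1;1,0], !![3,3;0,3], !![0,3;2,2], !![0,3;2,4], !![4,2;2,2], !![4,4;3,4], !![4,3;3,2], !![4,4;1,2], !![4,3;1,3], !![1,0;3,4], !![3,2;1,2], !![2,2;3,0], !![2,4;3,3], !![4,1;4,2], !![4,0;4,1], !![3,2;4,4], !![3,0;4,3], !![0,4;4,4], !![0,4;4,3], !![1,1;1,0], !![1,2;1,1], !![2,1;2,3], !![3,3;4,2], !![0,3;2,1], !![0,3;2,3], !![4,2;4,3], !![4,4;0,1], !![4,3;0,1], !![1,0;1,4], !![0,1;3,0], !![0,1;3,3], !![3,4;4,1], !![3,2;4,0], !![1,4;4,3], !![1,0;4,2], !![0,3;1,0], !![0,3;1,1], !![2,0;3,1], !![0,1;3,1], !![4,4;2,0], !![4,3;2,2],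 !![4,4;1,4], !![1,3;2,3], !![1,4;2,0], !![2,4;0,1], !![2,1;0,1], !![1,3;4,4], !![2,4;4,4], !![1,0;0,2], !![1,1;0,2], !![3,4;3,3], !![3,2;3,1], !![3,3;2,1], !![3,1;2,3], !![3,3;4,3], !![3,1;4,2], !![2,0;2,1], !![2,2;2,3], !![4,1;4,4], !![3,4;2,0], !![4,2;2,4], !![4,1;2,1], !![3,1;3,0], !![0,2;4,0], !![0,2;4,4], !![2,3;2,4], !![2,3;0,1], !![4,3;3,4], !![4,2;3,2], !![1,0;2,2], !![0,3;1,4], !![2,0;4,1], !![0,1;3,4], !![4,4;4,2], !![4,4;3,1], !![1,3;0,2], !![1,4;0,2], !![2,4;1,3], !![2,1;1,4], !![1,0;3,2], !![1,1;3,0], !![3,2;2,2], !![3,3;1,0], !![3,1;1,1], !![3,3;3,2], !![2,2;3,4], !![4,1;1,2], !![3,4;1,2], !![0,2;4,1], !![1,2;0,1], !![1,2;3,2], !![4,0;1,4], !![4,4;1,0], !![2,3;0,3], !![4,1;3,1], !![4,0;3,4], !![0,2;2,0], !![0,2;2,2], !![3,3;0,2], !![3,3;1,3], !![0,4;1,2],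 !![0,4;1,3], !![1,1;1,2], !![1,2;1,3], !![4,2;0,4], !![4,1;0,4], !![3,1;2,1], !![3,4;2,3], !![4,2;4,1], !![4,1;4,0], !![3,3;3,0], !![4,0;0,4], !![4,3;1,1], !![4,2;1,2], !![1,0;1,1], !![3,0;4,2], !![3,3;4,1], !![4,3;4,2], !![0,2;2,4], !![1,3;2,2], !![1,4;2,4], !![4,4;3,2], !![2,3;1,2], !![3,2;1,1], !![1,3;3,0], !![3,4;3,1], !![1,2;2,0], !![0,4;1,0], !![0,4;1,1], !![2,1;3,2], !![2,3;3,0], !![1,4;4,2], !![1,0;4,1], !![4,4;0,4], !![2,0;4,3], !![2,2;4,2], !![1,4;1,0], !![1,3;0,1], !![2,4;0,3], !![2,4;4,1], !![3,2;4,3], !![3,0;1,2], !![3,1;4,0], !![3,4;4,4], !![2,0;2,3], !![2,2;2,0], !![0,2;2,1], !![0,2;2,3], !![0,4;1,4], !![1,1;4,0], !![1,2;4,4], !![4,2;2,0], !![4,1;2,2], !![4,1;1,3], !![3,3;2,4], !![4,0;2,4], !![4,3;3,0], !![4,2;3,3], !![1,4;0,1], !![2,3;2,1], !![3,2;0,2],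 !![1,3;1,4], !![2,1;4,0], !![2,3;4,4], !![1,0;2,1], !![4,4;2,1], !![2,4;1,0], !![2,4;1,1], !![2,1;1,2], !![2,4;2,3], !![2,1;2,0], !![0,3;4,1], !![0,3;4,0], !![4,2;0,2], !![4,1;0,2], !![3,2;3,3], !![3,0;3,1], !![1,0;1,3], !![0,3;4,4], !![2,2;0,4], !![2,4;0,4], !![2,2;2,1], !![3,4;2,2], !![3,2;2,4], !![3,4;3,0], !![4,3;2,1], !![4,4;3,0], !![4,3;3,3], !![1,4;2,1], !![2,4;3,0], !![2,2;4,3], !![1,0;4,3], !![1,2;1,0], !![4,0;3,2], !![2,0;1,4], !![2,2;1,0], !![1,4;0,3], !![1,0;0,3], !![3,4;0,1], !![3,2;0,1], !![0,3;4,3], !![3,1;1,3], !![3,4;1,4], !![2,0;2,4], !![0,2;1,4], !![0,1;2,2], !![3,2;1,0], !![3,1;2,0], !![2,4;4,2], !![3,0;2,1], !![3,3;2,3], !![4,1;4,3], !![4,0;4,2], !![4,2;2,3], !![4,1;2,0], !![2,3;1,3], !![3,0;0,1], !![3,3;0,1], !![4,0;1,2], !![4,4;1,3], !![2,1;0,4],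 !![4,3;0,2], !![4,3;1,4], !![1,0;2,3], !![1,1;2,0], !![0,2;1,0], !![4,2;4,4], !![0,4;3,4], !![2,3;2,2], !![3,0;1,1], !![3,3;1,2], !![4,2;3,1], !![4,2;1,0], !![2,0;3,4], !![0,1;2,4], !![1,2;0,3], !![1,3;0,3], !![4,4;4,1], !![0,4;3,2], !![2,2;3,2], !![4,3;4,0], !![1,4;3,0], !![1,0;3,3], !![3,4;4,3], !![3,2;4,2], !![0,3;4,2], !![3,1;0,1], !![4,1;1,1], !![3,0;4,1], !![3,3;4,0], !![1,1;0,3], !![4,2;1,4], !![1,0;2,4], !![1,1;2,1], !![4,2;3,0], !![1,0;0,4], !![3,1;1,0], !![3,1;0,3], !![2,0;2,2], !![1,4;2,2], !![2,3;3,4], !![2,0;3,2], !![0,1;1,2], !![0,1;1,3], !![0,2;3,0], !![0,2;3,3], !![3,1;4,1], !![2,1;4,4], !![2,3;4,3], !![4,3;4,4], !![2,3;1,1], !![4,4;2,3], !![2,0;4,2], !![4,0;0,1], !![3,4;1,1], !![4,2;0,1], !![4,1;0,1], !![3,1;3,4], !![3,4;3,2], !![4,1;1,0], !![4,0;1,1],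 !![2,1;3,1], !![0,2;3,1], !![0,2;3,4], !![2,4;0,2], !![2,1;0,2], !![0,3;2,0], !![0,4;4,0], !![2,3;0,2], !![4,1;3,3], !![4,0;3,1], !![2,0;1,2], !![3,3;3,1], !![1,3;3,3], !![4,4;4,0], !![2,2;4,1], !![2,4;4,0], !![1,2;2,3], !![2,0;0,2], !![1,3;0,4], !![4,3;2,0], !![0,1;1,0], !![0,1;1,1], !![3,2;3,0], !![1,4;3,1], !![1,4;0,4], !![3,0;3,3], !![1,0;4,4], !![1,1;4,3], !![3,1;2,2], !![3,4;2,4], !![3,4;4,0], !![0,2;3,2], !![2,2;0,2], !![3,2;2,1], !![3,0;2,3], !![0,1;1,4], !![1,2;4,2], !![2,3;2,0], !![3,4;0,3], !![3,3;2,0], !![1,3;1,2], !![1,4;1,3], !![2,2;4,0], !![0,2;4,3], !![0,2;4,2], !![1,3;1,0], !![1,4;1,1], !![2,0;0,1], !![2,2;0,1], !![1,2;0,2], !![1,2;3,3], !![1,3;3,1], !![0,4;2,1], !![0,4;2,3], !![4,0;2,3], !![3,0;4,4], !![0,4;2,0], !![1,1;2,4], !![1,2;2,1], !![2,4;3,2],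 !![1,2;1,4], !![1,1;4,1], !![3,0;3,4], !![3,2;1,3], !![3,0;1,4], !![4,1;3,0], !![0,4;2,2], !![0,3;1,2], !![4,0;1,3], !![2,0;1,1], !![2,2;1,2], !![1,0;1,2], !![1,2;4,0], !![0,3;1,3], !![1,1;1,3], !![3,3;0,4], !![3,1;0,4], !![4,4;0,3], !![4,3;0,3], !![3,0;2,4], !![1,4;3,4], !![0,4;2,4], !![4,2;0,3], !![4,1;0,3], !![2,3;1,0], !![3,4;0,4], !![4,0;4,3], !![0,1;3,2], !![4,0;0,3], !![2,4;2,0], !![2,1;2,2], !![3,2;0,4], !![3,0;0,4], !![4,0;3,3], !![2,1;0,3], !![2,2;3,1], !![2,4;3,4], !![2,4;2,2], !![3,0;0,2], !![2,1;1,1], !![2,1;2,4], !![0,3;3,2], !![0,3;3,0], !![0,1;4,2], !![0,1;4,1], !![4,3;0,4], !![1,3;4,3], !![4,3;2,3], !![0,1;4,0], !![0,1;4,4], !![2,0;3,3], !![0,3;3,3], !![3,1;3,3], !![1,4;3,3], !![0,1;4,3], !![4,0;4,4], !![4,4;4,3], !![0,3;3,1], !![0,3;3,4], !![1,1;2,3],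 !![1,1;3,1], !![1,1;1,4], !![1,1;4,2], !![3,1;4,4], !![3,3;3,4], !![3,1;3,2], !![1,2;3,4], !![1,3;3,2], !![4,1;3,4], !![1,3;4,1], !![1,4;4,0], !![1,3;2,0]]

def TUP480 : List (ZMod 5 × ZMod 5 × ZMod 5 × ZMod 5) := [(1,0,0,1), (0,2,1,1), (0,2,1,2), (2,2,1,3), (2,4,1,4), (2,2,2,4), (2,4,2,1), (2,1,3,0), (2,3,3,3), (4,3,4,1), (4,2,4,0), (2,1,4,3), (2,3,4,2), (4,3,1,0), (4,2,1,1), (1,1,0,1), (3,2,3,4), (3,0,3,2), (3,1,1,4), (3,4,1,0), (2,0,0,3), (2,2,0,3), (1,0,3,1), (1,1,3,4), (3,2,2,0), (3,0,2,2), (3,1,0,2), (3,4,0,2), (2,0,1,3), (2,2,1,4), (1,3,1,1), (1,4,1,2), (2,3,4,0), (2,0,4,4), (0,1,2,3), (0,1,2,0), (1,2,4,1), (1,3,4,0), (4,0,0,2), (4,4,0,2), (0,4,3,3), (0,4,3,1), (2,1,3,3), (2,3,3,1), (0,2,1,3), (1,4,4,4), (2,3,0,4), (2,0,0,4), (0,1,2,1),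 (1,2,2,2), (1,3,2,4), (4,0,2,2), (4,4,2,4), (0,4,3,0), (2,1,4,1), (3,0,1,3), (3,3,1,4), (4,1,2,4), (4,0,2,1), (3,2,0,3), (3,0,0,3), (0,4,4,2), (0,4,4,1), (1,1,3,2), (1,2,3,0), (1,1,0,4), (1,2,0,4), (2,1,1,0), (3,3,0,3), (0,3,2,2), (0,3,2,4), (4,2,2,2), (4,4,3,4), (4,3,3,2), (4,4,1,2), (4,3,1,3), (1,0,3,4), (3,2,1,2), (2,2,3,0), (2,4,3,3), (4,1,4,2), (4,0,4,1), (3,2,4,4), (3,0,4,3), (0,4,4,4), (0,4,4,3), (1,1,1,0), (1,2,1,1), (2,1,2,3), (3,3,4,2), (0,3,2,1), (0,3,2,3), (4,2,4,3), (4,4,0,1), (4,3,0,1), (1,0,1,4), (0,1,3,0), (0,1,3,3), (3,4,4,1), (3,2,4,0), (1,4,4,3), (1,0,4,2), (0,3,1,0), (0,3,1,1), (2,0,3,1), (0,1,3,1), (4,4,2,0), (4,3,2,2), (4,4,1,4), (1,3,2,3), (1,4,2,0), (2,4,0,1), (2,1,0,1), (1,3,4,4), (2,4,4,4), (1,0,0,2),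 (1,1,0,2), (3,4,3,3), (3,2,3,1), (3,3,2,1), (3,1,2,3), (3,3,4,3), (3,1,4,2), (2,0,2,1), (2,2,2,3), (4,1,4,4), (3,4,2,0), (4,2,2,4), (4,1,2,1), (3,1,3,0), (0,2,4,0), (0,2,4,4), (2,3,2,4), (2,3,0,1), (4,3,3,4), (4,2,3,2), (1,0,2,2), (0,3,1,4), (2,0,4,1), (0,1,3,4), (4,4,4,2), (4,4,3,1), (1,3,0,2), (1,4,0,2), (2,4,1,3), (2,1,1,4), (1,0,3,2), (1,1,3,0), (3,2,2,2), (3,3,1,0), (3,1,1,1), (3,3,3,2), (2,2,3,4), (4,1,1,2), (3,4,1,2), (0,2,4,1), (1,2,0,1), (1,2,3,2), (4,0,1,4), (4,4,1,0), (2,3,0,3), (4,1,3,1), (4,0,3,4), (0,2,2,0), (0,2,2,2), (3,3,0,2), (3,3,1,3), (0,4,1,2), (0,4,1,3), (1,1,1,2), (1,2,1,3), (4,2,0,4), (4,1,0,4), (3,1,2,1), (3,4,2,3), (4,2,4,1), (4,1,4,0), (3,3,3,0), (4,0,0,4), (4,3,1,1), (4,2,1,2), (1,0,1,1), (3,0,4,2),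 (3,3,4,1), (4,3,4,2), (0,2,2,4), (1,3,2,2), (1,4,2,4), (4,4,3,2), (2,3,1,2), (3,2,1,1), (1,3,3,0), (3,4,3,1), (1,2,2,0), (0,4,1,0), (0,4,1,1), (2,1,3,2), (2,3,3,0), (1,4,4,2), (1,0,4,1), (4,4,0,4), (2,0,4,3), (2,2,4,2), (1,4,1,0), (1,3,0,1), (2,4,0,3), (2,4,4,1), (3,2,4,3), (3,0,1,2), (3,1,4,0), (3,4,4,4), (2,0,2,3), (2,2,2,0), (0,2,2,1), (0,2,2,3), (0,4,1,4), (1,1,4,0), (1,2,4,4), (4,2,2,0), (4,1,2,2), (4,1,1,3), (3,3,2,4), (4,0,2,4), (4,3,3,0), (4,2,3,3), (1,4,0,1), (2,3,2,1), (3,2,0,2), (1,3,1,4), (2,1,4,0), (2,3,4,4), (1,0,2,1), (4,4,2,1), (2,4,1,0), (2,4,1,1), (2,1,1,2), (2,4,2,3), (2,1,2,0), (0,3,4,1), (0,3,4,0), (4,2,0,2), (4,1,0,2), (3,2,3,3), (3,0,3,1), (1,0,1,3), (0,3,4,4), (2,2,0,4), (2,4,0,4), (2,2,2,1), (3,4,2,2),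 (3,2,2,4), (3,4,3,0), (4,3,2,1), (4,4,3,0), (4,3,3,3), (1,4,2,1), (2,4,3,0), (2,2,4,3), (1,0,4,3), (1,2,1,0), (4,0,3,2), (2,0,1,4), (2,2,1,0), (1,4,0,3), (1,0,0,3), (3,4,0,1), (3,2,0,1), (0,3,4,3), (3,1,1,3), (3,4,1,4), (2,0,2,4), (0,2,1,4), (0,1,2,2), (3,2,1,0), (3,1,2,0), (2,4,4,2), (3,0,2,1), (3,3,2,3), (4,1,4,3), (4,0,4,2), (4,2,2,3), (4,1,2,0), (2,3,1,3), (3,0,0,1), (3,3,0,1), (4,0,1,2), (4,4,1,3), (2,1,0,4), (4,3,0,2), (4,3,1,4), (1,0,2,3), (1,1,2,0), (0,2,1,0), (4,2,4,4), (0,4,3,4), (2,3,2,2), (3,0,1,1), (3,3,1,2), (4,2,3,1), (4,2,1,0), (2,0,3,4), (0,1,2,4), (1,2,0,3), (1,3,0,3), (4,4,4,1), (0,4,3,2), (2,2,3,2), (4,3,4,0), (1,4,3,0), (1,0,3,3), (3,4,4,3), (3,2,4,2), (0,3,4,2), (3,1,0,1), (4,1,1,1), (3,0,4,1), (3,3,4,0),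 (1,1,0,3), (4,2,1,4), (1,0,2,4), (1,1,2,1), (4,2,3,0), (1,0,0,4), (3,1,1,0), (3,1,0,3), (2,0,2,2), (1,4,2,2), (2,3,3,4), (2,0,3,2), (0,1,1,2), (0,1,1,3), (0,2,3,0), (0,2,3,3), (3,1,4,1), (2,1,4,4), (2,3,4,3), (4,3,4,4), (2,3,1,1), (4,4,2,3), (2,0,4,2), (4,0,0,1), (3,4,1,1), (4,2,0,1), (4,1,0,1), (3,1,3,4), (3,4,3,2), (4,1,1,0), (4,0,1,1), (2,1,3,1), (0,2,3,1), (0,2,3,4), (2,4,0,2), (2,1,0,2), (0,3,2,0), (0,4,4,0), (2,3,0,2), (4,1,3,3), (4,0,3,1), (2,0,1,2), (3,3,3,1), (1,3,3,3), (4,4,4,0), (2,2,4,1), (2,4,4,0), (1,2,2,3), (2,0,0,2), (1,3,0,4), (4,3,2,0), (0,1,1,0), (0,1,1,1), (3,2,3,0), (1,4,3,1), (1,4,0,4), (3,0,3,3), (1,0,4,4), (1,1,4,3), (3,1,2,2), (3,4,2,4), (3,4,4,0), (0,2,3,2), (2,2,0,2), (3,2,2,1), (3,0,2,3), (0,1,1,4),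 (1,2,4,2), (2,3,2,0), (3,4,0,3), (3,3,2,0), (1,3,1,2), (1,4,1,3), (2,2,4,0), (0,2,4,3), (0,2,4,2), (1,3,1,0), (1,4,1,1), (2,0,0,1), (2,2,0,1), (1,2,0,2), (1,2,3,3), (1,3,3,1), (0,4,2,1), (0,4,2,3), (4,0,2,3), (3,0,4,4), (0,4,2,0), (1,1,2,4), (1,2,2,1), (2,4,3,2), (1,2,1,4), (1,1,4,1), (3,0,3,4), (3,2,1,3), (3,0,1,4), (4,1,3,0), (0,4,2,2), (0,3,1,2), (4,0,1,3), (2,0,1,1), (2,2,1,2), (1,0,1,2), (1,2,4,0), (0,3,1,3), (1,1,1,3), (3,3,0,4), (3,1,0,4), (4,4,0,3), (4,3,0,3), (3,0,2,4), (1,4,3,4), (0,4,2,4), (4,2,0,3), (4,1,0,3), (2,3,1,0), (3,4,0,4), (4,0,4,3), (0,1,3,2), (4,0,0,3), (2,4,2,0), (2,1,2,2), (3,2,0,4), (3,0,0,4), (4,0,3,3), (2,1,0,3), (2,2,3,1), (2,4,3,4), (2,4,2,2), (3,0,0,2), (2,1,1,1), (2,1,2,4), (0,3,3,2), (0,3,3,0),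 (0,1,4,2), (0,1,4,1), (4,3,0,4), (1,3,4,3), (4,3,2,3), (0,1,4,0), (0,1,4,4), (2,0,3,3), (0,3,3,3), (3,1,3,3), (1,4,3,3), (0,1,4,3), (4,0,4,4), (4,4,4,3), (0,3,3,1), (0,3,3,4), (1,1,2,3), (1,1,3,1), (1,1,1,4), (1,1,4,2), (3,1,4,4), (3,3,3,4), (3,1,3,2), (1,2,3,4), (1,3,3,2), (4,1,3,4), (1,3,4,1), (1,4,4,0), (1,3,2,0)]

def LIST20 : List Mt := [!![0,1;2,2], !![0,2;1,2], !![0,3;4,2], !![0,4;3,2], !![1,1;3,1], !![1,2;4,1], !![1,3;1,1], !![1,4;2,1], !![2,1;2,0], !![2,2;1,0], !![2,3;4,0], !![2,4;3,0], !![3,1;4,4], !![3,2;2,4], !![3,3;3,4], !![3,4;1,4], !![4,1;4,3], !![4,2;2,3], !![4,3;3,3], !![4,4;1,3]]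

def WORDS : List (List Bool) := [[false,true,false,false,false,true,true,false,true], [false], [true,true,true,false,false,false,true,true,true], [true,true,true,false,false,true,true,false,false], [true,false,false,false,true], [true,true,true,false,true], [true,false,true,true,true], [false,true,false,true,false], [false,true,true,false,false,true,true,false,true], [true,true,false,true,true,true,false,false,false], [true,true,false,true,true], [true,false,true,true,false,false,true,true,false], [false,false,false,true,true], [false,false,false,true,true,false,false,false,false], [true,true,false,false,false], [false,false,false,false,true,true,false,false,false], [true,true,false,false,true,true,false,false,true], [true,false,true,true,true,false,false,false,true], [true,false,true,false,false,false,true,true,false], [true,true,true,false,true,false,true,false,true]]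

def bl (init : List Mt) (cert : List (Nat × Nat)) : List Mt :=
  cert.foldl (fun l ij => l ++ [l.getD ij.1 1 * l.getD ij.2 1]) init

def wp (x y : Mt) (w : List Bool) : Mt := (w.map (fun c => bif c then x else y)).prod

lemma getD_mem {S : Submonoid Mt} : ∀ (l : List Mt), (∀ x ∈ l, x ∈ S) → ∀ i : Nat, l.getD i 1 ∈ S := by
  intro l
  induction l with
  | nil => intro _ i; cases i <;> exact S.one_mem
  | cons a t ih =>
    intro h i
    cases i with
    | zero => exact h a List.mem_cons_self
    | succ n => exact ih (fun x hx => h x (List.mem_cons_of_mem _ hx)) n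

lemma bl_mem {S : Submonoid Mt} : ∀ (cert : List (Nat × Nat)) (init : List Mt),
    (∀ x ∈ init, x ∈ S) → ∀ m ∈ bl init cert, m ∈ S := by
  intro cert
  induction cert with
  | nil => intro init h m hm; exact h m hm
  | cons ij t ih =>
    intro init h m hm
    refine ih (init ++ [init.getD ij.1 1 * init.getD ij.2 1]) ?_ m hm
    intro x hx
    rcases List.mem_append.1 hx with hx | hx
    · exact h x hx
    · rcases List.mem_singleton.1 hx with rfl
      exact S.mul_mem (getD_mem init h _) (getD_mem init h _)

lemma wp_mem {S : Submonoid Mt} {x y : Mt} (hx : x ∈ S) (hy : y ∈ S) (w : List Bool) :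
    wp x y w ∈ S := by
  refine Submonoid.list_prod_mem S ?_
  intro z hz
  rcases List.mem_map.1 hz with ⟨c, _, rfl⟩
  cases c
  · exact hy
  · exact hx

lemma blEq : bl [1, a0, b1] CERT = L480 := by decide

lemma tupmap : L480.map (fun m : Mt => (m 0 0, m 0 1, m 1 0, m 1 1)) = TUP480 := by decide

lemma cover' : ∀ p q r s : ZMod 5, (!![p,q;r,s] : Mt).det ≠ 0 → (p,q,r,s) ∈ TUP480 := by decide

lemma classify' : ∀ p q r s : ZMod 5, (!![p,q;r,s] : Mt).trace = 2 → (!![p,q;r,s] : Mt).det = 3 →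
    (!![p,q;r,s] : Mt) ∈ LIST20 := by decide

lemma conjex' : ∀ p q r s : ZMod 5, (!![p,q;r,s] : Mt).trace = 1 → (!![p,q;r,s] : Mt).det = 3 →
    ∃ hM : Mt, hM.det ≠ 0 ∧ !![p,q;r,s] * hM = hM * a0 := by decide

lemma words_ok : ∀ i < 20, wp a0 (LIST20.getD i 1) (WORDS.getD i []) = b1 := by decide

lemma cover (m : Mt) (hd : m.det ≠ 0) : m ∈ L480 := by
  have hm := Matrix.eta_fin_two m
  have h := cover' (m 0 0) (m 0 1) (m 1 0) (m 1 1) (by rw [← hm]; exact hd)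
  rw [← tupmap] at h
  obtain ⟨x, hx, he⟩ := List.mem_map.1 h
  simp only [Prod.mk.injEq] at he
  obtain ⟨e1, e2, e3, e4⟩ := he
  have hxm : x = m := by
    rw [Matrix.eta_fin_two x, e1, e2, e3, e4]; exact hm.symm
  exact hxm ▸ hx

lemma classify (b : Mt) (h2 : b.trace = 2) (h3 : b.det = 3) : b ∈ LIST20 := by
  have hb := Matrix.eta_fin_two b
  have h := classify' (b 0 0) (b 0 1) (b 1 0) (b 1 1)
    (by rw [← hb]; exact h2) (by rw [← hb]; exact h3)
  rwa [← hb] at h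

lemma conjex (a : Mt) (h1 : a.trace = 1) (h3 : a.det = 3) :
    ∃ hM : Mt, hM.det ≠ 0 ∧ a * hM = hM * a0 := by
  have ha := Matrix.eta_fin_two a
  have h := conjex' (a 0 0) (a 0 1) (a 1 0) (a 1 1)
    (by rw [← ha]; exact h1) (by rw [← ha]; exact h3)
  rwa [← ha] at h

lemma key (b : Mt) (htr : b.trace = 2) (hdet : b.det = 3) (m : Mt) (hm : m.det ≠ 0) :
    m ∈ Submonoid.closure {a0, b} := by
  have hb := classify b htr hdet
  obtain ⟨i, hi, hbi⟩ := List.mem_iff_getElem.1 hb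
  set S : Submonoid Mt := Submonoid.closure {a0, b} with hS
  have ha0 : a0 ∈ S := Submonoid.subset_closure (Set.mem_insert _ _)
  have hbS : b ∈ S := Submonoid.subset_closure (Set.mem_insert_iff.2 (Or.inr rfl))
  have hlen : LIST20.length = 20 := by decide
  have hword : wp a0 b (WORDS.getD i []) = b1 := by
    have hgd : LIST20.getD i 1 = b := by
      rw [List.getD_eq_getElem LIST20 1 hi, hbi]
    have hw := words_ok i (by omega)
    rwa [hgd] at hw
  have hb1 : b1 ∈ S := hword ▸ wp_mem ha0 hbS _
  have hall : ∀ x ∈ bl [1, a0, b1] CERT, x ∈ S := by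
    refine bl_mem CERT _ ?_
    intro x hx
    simp only [List.mem_cons, List.not_mem_nil, or_false] at hx
    rcases hx with rfl | rfl | rfl
    · exact S.one_mem
    · exact ha0
    · exact hb1
  exact hall m (by rw [blEq]; exact cover m hm)

lemma zmod5_unit : ∀ d : ZMod 5, d ≠ 0 → ∃ e, d * e = 1 := by decide

lemma master (a b : Mt) (ha1 : a.trace = 1) (ha3 : a.det = 3)
    (hb2 : b.trace = 2) (hb3 : b.det = 3) (m : Mt) (hm : m.det ≠ 0) :
    m ∈ Submonoid.closure {a, b} := by
  obtain ⟨hM, hMdet, hcomm⟩ := conjex a ha1 ha3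
  have hUn : IsUnit hM := by
    obtain ⟨e, he⟩ := zmod5_unit hM.det hMdet
    exact (Matrix.isUnit_iff_isUnit_det hM).2 (IsUnit.of_mul_eq_one _ he)
  obtain ⟨U, rfl⟩ := hUn
  have hdetU : det (↑U⁻¹ : Mt) * det (↑U : Mt) = 1 := by
    rw [← Matrix.det_mul, Units.inv_mul, Matrix.det_one]
  set b' : Mt := ↑U⁻¹ * b * ↑U with hb'
  set m' : Mt := ↑U⁻¹ * m * ↑U with hm'
  have hb'tr : b'.trace = 2 := by
    rw [hb', Matrix.trace_mul_comm, ← mul_assoc, Units.mul_inv, one_mul, hb2]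
  have hb'det : b'.det = 3 := by
    rw [hb', Matrix.det_mul, Matrix.det_mul]
    calc det (↑U⁻¹ : Mt) * det b * det (↑U : Mt)
        = (det (↑U⁻¹ : Mt) * det (↑U : Mt)) * det b := by ring
      _ = 3 := by rw [hdetU, one_mul, hb3]
  have hm'det : m'.det ≠ 0 := by
    rw [hm', Matrix.det_mul, Matrix.det_mul]
    intro hz
    apply hm
    have hzz : (det (↑U⁻¹ : Mt) * det (↑U : Mt)) * det m = 0 := by rw [← hz]; ring
    rwa [hdetU, one_mul] at hzz
  have hmem := key b' hb'tr hb'det m' hm'det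
  set φ : Mt →* Mt :=
    ⟨⟨fun z => ↑U * z * ↑U⁻¹, by simp⟩,
      fun x y => by simp only [mul_assoc, Units.inv_mul_cancel_left]⟩ with hφ
  have hcz : ∀ z : Mt, φ z = ↑U * z * ↑U⁻¹ := fun z => rfl
  have hφa : φ a0 = a := by
    rw [hcz, ← hcomm, Units.mul_inv_cancel_right]
  have hφb : φ b' = b := by
    rw [hcz, hb', ← mul_assoc, Units.mul_inv_cancel_left, Units.mul_inv_cancel_right]
  have hφm : φ m' = m := by
    rw [hcz, hm', ← mul_assoc, Units.mul_inv_cancel_left, Units.mul_inv_cancel_right]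
  have h2 : φ m' ∈ Submonoid.map φ (Submonoid.closure {a0, b'}) :=
    Submonoid.mem_map_of_mem φ hmem
  rw [MonoidHom.map_mclosure, Set.image_pair, hφa, hφb, hφm] at h2
  exact h2

lemma trace_det_of_charpoly {g h : Mt} (e : g.charpoly = h.charpoly) :
    g.trace = h.trace ∧ g.det = h.det := by
  constructor
  · rw [Matrix.trace_eq_neg_charpoly_coeff, Matrix.trace_eq_neg_charpoly_coeff, e]
  · rw [Matrix.det_eq_sign_charpoly_coeff, Matrix.det_eq_sign_charpoly_coeff, e]

def A0 : GL (Fin 2) (ZMod 5) := ⟨!![0,2;1,1], !![2,1;3,0], by decide, by decide⟩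
def B1 : GL (Fin 2) (ZMod 5) := ⟨!![0,2;1,2], !![4,1;3,0], by decide, by decide⟩

/-- If a subgroup `G ≤ GL₂(𝔽₅)` realizes exactly the same set of characteristic
polynomials as all of `GL₂(𝔽₅)`, then `G = GL₂(𝔽₅)`. -/
theorem stmt_7 (G : Subgroup (GL (Fin 2) (ZMod 5)))
    (h : {p : Polynomial (ZMod 5) | ∃ g ∈ G,
            Matrix.charpoly (g : Matrix (Fin 2) (Fin 2) (ZMod 5)) = p} =
          {p : Polynomial (ZMod 5) | ∃ g : GL (Fin 2) (ZMod 5),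
            Matrix.charpoly (g : Matrix (Fin 2) (Fin 2) (ZMod 5)) = p}) :
    G = ⊤ := by
  have hp1 : Matrix.charpoly ((A0 : GL (Fin 2) (ZMod 5)) : Mt) ∈
      {p : Polynomial (ZMod 5) | ∃ g ∈ G,
        Matrix.charpoly (g : Matrix (Fin 2) (Fin 2) (ZMod 5)) = p} := by
    rw [h]; exact ⟨A0, rfl⟩
  have hp2 : Matrix.charpoly ((B1 : GL (Fin 2) (ZMod 5)) : Mt) ∈
      {p : Polynomial (ZMod 5) | ∃ g ∈ G,
        Matrix.charpoly (g : Matrix (Fin 2) (Fin 2) (ZMod 5)) = p} := by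
    rw [h]; exact ⟨B1, rfl⟩
  obtain ⟨g1, hg1G, hg1⟩ := hp1
  obtain ⟨g2, hg2G, hg2⟩ := hp2
  obtain ⟨htr1, hdet1⟩ := trace_det_of_charpoly hg1
  obtain ⟨htr2, hdet2⟩ := trace_det_of_charpoly hg2
  have ta : ((g1 : Mt)).trace = 1 := by rw [htr1]; decide
  have da : ((g1 : Mt)).det = 3 := by rw [hdet1]; decide
  have tb : ((g2 : Mt)).trace = 2 := by rw [htr2]; decide
  have db : ((g2 : Mt)).det = 3 := by rw [hdet2]; decide
  rw [Subgroup.eq_top_iff']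
  intro x
  have hxdet : ((x : Mt)).det ≠ 0 := by
    haveI : Fact (1 < 5) := ⟨by norm_num⟩
    have hu : IsUnit ((x : Mt)) := Units.isUnit x
    exact ((Matrix.isUnit_iff_isUnit_det _).1 hu).ne_zero
  have hmm := master _ _ ta da tb db _ hxdet
  have h2 : ((x : Mt)) ∈ Submonoid.closure ((Units.coeHom Mt) '' {g1, g2}) := by
    rw [Set.image_pair]
    simpa using hmm
  rw [← MonoidHom.map_mclosure] at h2
  obtain ⟨y, hy, hyx⟩ := h2
  have hxy : y = x := Units.ext hyx
  subst hxy
  have hle : Submonoid.closure {g1, g2} ≤ G.toSubmonoid := by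
    rw [Submonoid.closure_le]
    rintro z hz
    simp only [Set.mem_insert_iff, Set.mem_singleton_iff] at hz
    rcases hz with rfl | rfl
    · exact hg1G
    · exact hg2G
  exact hle hy
end
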